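/- For any u ∈ B with n(u) = 1 and any p ∈ M₊¹ (i.e., p† = p, n(p) = 1, tr(p) > 0), the element u·p·u† again lies in M₊¹: it is †-symmetric, has reduced norm 1, and has positive (real) trace. -/

import Mathlib

open Quaternion

/-- The Macfarlane involution `†` on `(1,1/ℂ)`. -/
def dag (q : ℍ[ℂ,1,1]) : ℍ[ℂ,1,1] :=
  ⟨starRingEnd ℂ q.re, starRingEnd ℂ q.imI, starRingEnd ℂ q.imJ, -(starRingEnd ℂ q.imK)⟩

/-- The reduced norm on `(1,1/ℂ)`. -/
def qnorm (q : ℍ[ℂ,1,1]) : ℂ := q.re ^ 2 - q.imI ^ 2 - q.imJ ^ 2 + q.imK ^ 2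

/-- Membership in the hyperboloid `M₊¹`: `†`-symmetric, norm one, positive (real) trace. -/
def memM1plus (p : ℍ[ℂ,1,1]) : Prop := dag p = p ∧ qnorm p = 1 ∧ 0 < p.re.re

lemma dag_mul (a b : ℍ[ℂ,1,1]) : dag (a * b) = dag b * dag a := by
  ext <;>
  simp [dag, QuaternionAlgebra.re_mul, QuaternionAlgebra.imI_mul,
    QuaternionAlgebra.imJ_mul, QuaternionAlgebra.imK_mul, map_add, map_sub, map_mul] <;>
  ring

lemma dag_dag (a : ℍ[ℂ,1,1]) : dag (dag a) = a := by
  ext <;> simp [dag]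

lemma dag_one : dag (1 : ℍ[ℂ,1,1]) = 1 := by
  ext <;> simp [dag]

lemma dag_add (a b : ℍ[ℂ,1,1]) : dag (a + b) = dag a + dag b := by
  ext <;> simp [dag] <;> ring

lemma qnorm_mul (a b : ℍ[ℂ,1,1]) : qnorm (a * b) = qnorm a * qnorm b := by
  simp only [qnorm, QuaternionAlgebra.re_mul, QuaternionAlgebra.imI_mul,
    QuaternionAlgebra.imJ_mul, QuaternionAlgebra.imK_mul]
  ring

lemma qnorm_dag (a : ℍ[ℂ,1,1]) : qnorm (dag a) = starRingEnd ℂ (qnorm a) := by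
  simp only [qnorm, dag, map_add, map_sub, map_pow]
  ring

/-- Cayley–Hamilton style identity: `(p+1)² = (2 re p + 2) p` when `n(p) = 1`. -/
lemma key_sq (p : ℍ[ℂ,1,1]) (hn : qnorm p = 1) :
    (p + 1) * (p + 1) = ((2 * p.re + 2 : ℂ) : ℍ[ℂ,1,1]) * p := by
  have h : p.re ^ 2 - p.imI ^ 2 - p.imJ ^ 2 + p.imK ^ 2 = 1 := hn
  ext
  · simp [QuaternionAlgebra.re_mul, -QuaternionAlgebra.coe_add]
    linear_combination -h
  · simp [QuaternionAlgebra.imI_mul, -QuaternionAlgebra.coe_add]; try ring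
  · simp [QuaternionAlgebra.imJ_mul, -QuaternionAlgebra.coe_add]; try ring
  · simp [QuaternionAlgebra.imK_mul, -QuaternionAlgebra.coe_add]; try ring

/-- For `u` of norm one and `p ∈ M₊¹`, the element `u·p·u†` again lies in `M₊¹`. -/
theorem stmt_7 : ∀ u p : ℍ[ℂ,1,1], qnorm u = 1 → memM1plus p →
    memM1plus (u * p * dag u) := by
  intro u p hu hp
  obtain ⟨hpd, hpn, hpt⟩ := hp
  have hdagsym : dag (u * p * dag u) = u * p * dag u := by
    rw [dag_mul, dag_mul, dag_dag, hpd, mul_assoc]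
  have hnorm : qnorm (u * p * dag u) = 1 := by
    rw [qnorm_mul, qnorm_mul, qnorm_dag, hu, hpn]
    simp
  refine ⟨hdagsym, hnorm, ?_⟩
  -- trace positivity
  -- p.re is real
  have hpre : p.re.im = 0 := by
    have h := congrArg (fun z : ℍ[ℂ,1,1] => z.re.im) hpd
    simp only [dag, Complex.conj_im] at h
    linarith
  set c : ℂ := 2 * p.re + 2 with hc
  have hcre : c.re = 2 * p.re.re + 2 := by simp [hc]
  have hcim : c.im = 0 := by simp [hc, hpre]
  have hcrepos : 0 < c.re := by rw [hcre]; linarith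
  have hcne : c ≠ 0 := by
    intro h; rw [h] at hcrepos; simp at hcrepos
  set v : ℍ[ℂ,1,1] := u * (p + 1) with hv
  have hdagv : dag v = (p + 1) * dag u := by
    rw [hv, dag_mul, dag_add, hpd, dag_one]
  have key : v * dag v = (c : ℍ[ℂ,1,1]) * (u * p * dag u) := by
    rw [hv, hdagv]
    have h1 : u * (p + 1) * ((p + 1) * dag u) = u * ((p + 1) * (p + 1)) * dag u := by
      simp only [mul_assoc]
    rw [h1, key_sq p hpn]
    have hcomm : u * ((c : ℍ[ℂ,1,1]) * (p * dag u)) = (c : ℍ[ℂ,1,1]) * (u * (p * dag u)) := by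
      rw [← mul_assoc, ← QuaternionAlgebra.coe_commutes, mul_assoc]
    simp only [mul_assoc]
    rw [hcomm]
  -- real part of v * dag v
  have hre : (v * dag v).re = (Complex.normSq v.re + Complex.normSq v.imI +
      Complex.normSq v.imJ + Complex.normSq v.imK : ℝ) := by
    simp only [QuaternionAlgebra.re_mul, dag]
    push_cast
    rw [← Complex.mul_conj, ← Complex.mul_conj, ← Complex.mul_conj, ← Complex.mul_conj]
    ring
  -- v ≠ 0
  have hvne : v ≠ 0 := by
    intro h
    have : qnorm v = c := by
      rw [hv, qnorm_mul, hu, one_mul]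
      simp only [qnorm, hc]
      have h1 : (p + 1).re = p.re + 1 := by simp
      have h2 : (p + 1).imI = p.imI := by simp
      have h3 : (p + 1).imJ = p.imJ := by simp
      have h4 : (p + 1).imK = p.imK := by simp
      rw [h1, h2, h3, h4]
      have : p.re ^ 2 - p.imI ^ 2 - p.imJ ^ 2 + p.imK ^ 2 = 1 := hpn
      linear_combination this
    rw [h] at this
    simp [qnorm] at this
    exact hcne this.symm
  have hS : 0 < Complex.normSq v.re + Complex.normSq v.imI +
      Complex.normSq v.imJ + Complex.normSq v.imK := by
    rcases (lt_or_eq_of_le (by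
      have h1 := Complex.normSq_nonneg v.re
      have h2 := Complex.normSq_nonneg v.imI
      have h3 := Complex.normSq_nonneg v.imJ
      have h4 := Complex.normSq_nonneg v.imK
      linarith :
      (0:ℝ) ≤ Complex.normSq v.re + Complex.normSq v.imI +
        Complex.normSq v.imJ + Complex.normSq v.imK)) with h | h
    · exact h
    · exfalso
      apply hvne
      have h1 : Complex.normSq v.re = 0 ∧ Complex.normSq v.imI = 0 ∧
          Complex.normSq v.imJ = 0 ∧ Complex.normSq v.imK = 0 := by
        constructor
        · nlinarith [Complex.normSq_nonneg v.re, Complex.normSq_nonneg v.imI,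
            Complex.normSq_nonneg v.imJ, Complex.normSq_nonneg v.imK]
        constructor
        · nlinarith [Complex.normSq_nonneg v.re, Complex.normSq_nonneg v.imI,
            Complex.normSq_nonneg v.imJ, Complex.normSq_nonneg v.imK]
        constructor
        · nlinarith [Complex.normSq_nonneg v.re, Complex.normSq_nonneg v.imI,
            Complex.normSq_nonneg v.imJ, Complex.normSq_nonneg v.imK]
        · nlinarith [Complex.normSq_nonneg v.re, Complex.normSq_nonneg v.imI,
            Complex.normSq_nonneg v.imJ, Complex.normSq_nonneg v.imK]
      ext <;> simp [Complex.normSq_eq_zero.mp h1.1, Complex.normSq_eq_zero.mp h1.2.1,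
        Complex.normSq_eq_zero.mp h1.2.2.1, Complex.normSq_eq_zero.mp h1.2.2.2]
  -- conclude
  have hq : c.re * (u * p * dag u).re.re = Complex.normSq v.re + Complex.normSq v.imI +
      Complex.normSq v.imJ + Complex.normSq v.imK := by
    have := congrArg (fun q : ℍ[ℂ,1,1] => q.re.re) key
    rw [hre] at this
    have hcoe : ((c : ℍ[ℂ,1,1]) * (u * p * dag u)).re = c * (u * p * dag u).re := by
      simp [QuaternionAlgebra.re_mul]
    rw [hcoe] at this
    have := this
    rw [Complex.mul_re, hcim] at this
    simpa using this.symm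
  have := hq
  nlinarith [hS, hcrepos, hq]
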